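/- For every n ≥ 1 there is a constant C_n depending only on n such that for every Borel set Σ ⊆ ℝ^{n+1} (with μ_Σ the n-dimensional Hausdorff measure restricted to Σ), every x₀ ∈ ℝ^{n+1}, and every t₀ > 0, one has (4πt₀)^{−n/2} ∫ |x|² e^{−|x−x₀|²/(4t₀)} dμ_Σ(x) ≤ 2·λ(Σ)·( C_n·t₀ + |x₀|² ). -/

import Mathlib

noncomputable section
open Real MeasureTheory
open scoped ENNReal

/-- The Gaussian surface integral `F_{x₀,t₀}(Σ)`, computed against the `n`-dimensional
Hausdorff measure restricted to a set `S ⊆ ℝ^{n+1}`, with values in `[0,∞]`. -/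
def gaussianF (n : ℕ) (S : Set (EuclideanSpace ℝ (Fin (n+1))))
    (x₀ : EuclideanSpace ℝ (Fin (n+1))) (t₀ : ℝ) : ℝ≥0∞ :=
  ENNReal.ofReal ((4 * π * t₀) ^ (-(n:ℝ)/2)) *
    ∫⁻ x in S, ENNReal.ofReal (Real.exp (-‖x - x₀‖ ^ 2 / (4 * t₀))) ∂μH[(n:ℝ)]

/-- The entropy `λ(Σ) = sup_{x₀, t₀>0} F_{x₀,t₀}(Σ)`. -/
def entropy (n : ℕ) (S : Set (EuclideanSpace ℝ (Fin (n+1)))) : ℝ≥0∞ :=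
  ⨆ (x₀ : EuclideanSpace ℝ (Fin (n+1))) (t₀ : ℝ) (_ : 0 < t₀), gaussianF n S x₀ t₀

private lemma stmt11_aux2 (t₀ : ℝ) (ht : 0 < t₀) (r : ℝ) :
    2 * r ^ 2 * Real.exp (-r ^ 2 / (4 * t₀)) ≤
    (16 * t₀ / Real.exp 1) * Real.exp (-r ^ 2 / (8 * t₀)) := by
  set u : ℝ := r ^ 2 / (8 * t₀) with hu
  have hu0 : 0 ≤ u := by positivity
  have hr2 : r ^ 2 = 8 * t₀ * u := by rw [hu]; field_simp
  have h1 : Real.exp (-r ^ 2 / (4 * t₀)) = Real.exp (-u) * Real.exp (-u) := by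
    rw [← Real.exp_add]; congr 1; rw [hr2, div_eq_iff (by positivity)]; ring
  have h2 : Real.exp (-r ^ 2 / (8 * t₀)) = Real.exp (-u) := by
    congr 1; rw [hr2, div_eq_iff (by positivity)]; ring
  have key : u * Real.exp (-u) ≤ Real.exp (-1) := by
    have h := Real.add_one_le_exp (u - 1)
    calc u * Real.exp (-u) ≤ Real.exp (u-1) * Real.exp (-u) := by
          exact mul_le_mul_of_nonneg_right (by linarith) (Real.exp_pos _).le
      _ = Real.exp (-1) := by rw [← Real.exp_add]; ring_nf
  rw [h1, h2, hr2]
  have hE : (0:ℝ) < Real.exp (-u) := Real.exp_pos _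
  have he : Real.exp (-1) = 1 / Real.exp 1 := by rw [Real.exp_neg]; ring
  have heq : 2 * (8 * t₀ * u) * (Real.exp (-u) * Real.exp (-u))
      = 16 * t₀ * (u * Real.exp (-u)) * Real.exp (-u) := by ring
  rw [heq]
  have hbound : 16 * t₀ * (u * Real.exp (-u)) ≤ 16 * t₀ / Real.exp 1 := by
    calc 16 * t₀ * (u * Real.exp (-u)) ≤ 16 * t₀ * Real.exp (-1) :=
          mul_le_mul_of_nonneg_left key (by positivity)
      _ = 16 * t₀ / Real.exp 1 := by rw [he]; ring
  exact mul_le_mul_of_nonneg_right hbound hE.le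

private lemma stmt11_ptReal {E : Type*} [NormedAddCommGroup E] (t₀ : ℝ) (ht : 0 < t₀)
    (x x₀ : E) :
    ‖x‖ ^ 2 * Real.exp (-‖x - x₀‖ ^ 2 / (4 * t₀)) ≤
      (16 * t₀ / Real.exp 1) * Real.exp (-‖x - x₀‖ ^ 2 / (8 * t₀)) +
      (2 * ‖x₀‖ ^ 2) * Real.exp (-‖x - x₀‖ ^ 2 / (4 * t₀)) := by
  have haux := stmt11_aux2 t₀ ht ‖x - x₀‖
  have htri : ‖x‖ ≤ ‖x - x₀‖ + ‖x₀‖ := by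
    calc ‖x‖ = ‖(x - x₀) + x₀‖ := by rw [sub_add_cancel]
      _ ≤ ‖x - x₀‖ + ‖x₀‖ := norm_add_le _ _
  have hsq : ‖x‖ ^ 2 ≤ 2 * ‖x - x₀‖ ^ 2 + 2 * ‖x₀‖ ^ 2 := by
    have h := mul_self_le_mul_self (norm_nonneg x) htri
    nlinarith [sq_nonneg (‖x - x₀‖ - ‖x₀‖)]
  have hE : (0:ℝ) < Real.exp (-‖x - x₀‖ ^ 2 / (4 * t₀)) := Real.exp_pos _
  nlinarith [mul_le_mul_of_nonneg_right hsq hE.le]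

private lemma stmt11_scalarEq (n : ℕ) (t₀ : ℝ) (ht : 0 < t₀) :
    ((4 * π * t₀) ^ (-(n:ℝ)/2)) = 2 ^ ((n:ℝ)/2) * (4 * π * (2*t₀)) ^ (-(n:ℝ)/2) := by
  have hπ : (0:ℝ) < π := Real.pi_pos
  have h1 : (4 * π * t₀ : ℝ) = (4 * π * (2*t₀)) * 2⁻¹ := by ring
  rw [h1, Real.mul_rpow (by positivity) (by norm_num)]
  rw [show (-(n:ℝ)/2) = -((n:ℝ)/2) by ring]
  rw [Real.rpow_neg (by norm_num : (0:ℝ) ≤ 2⁻¹), Real.inv_rpow (by norm_num : (0:ℝ) ≤ 2),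
    inv_inv]
  ring

private lemma stmt11_le_entropy (n : ℕ) (S : Set (EuclideanSpace ℝ (Fin (n+1))))
    (x₀ : EuclideanSpace ℝ (Fin (n+1))) (t : ℝ) (ht : 0 < t) :
    gaussianF n S x₀ t ≤ entropy n S := by
  refine le_trans ?_ (le_iSup _ x₀)
  refine le_trans ?_ (le_iSup _ t)
  exact le_iSup (fun _ : 0 < t => gaussianF n S x₀ t) ht

/-- The weighted second-moment bound: for every `n ≥ 1` there is a
constant `C_n` so that for every Borel `Σ ⊆ ℝ^{n+1}`, `x₀`, and `t₀ > 0`,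
`(4πt₀)^{−n/2} ∫ |x|² e^{−|x−x₀|²/4t₀} dμ_Σ ≤ 2 λ(Σ) (C_n t₀ + |x₀|²)`. -/
theorem stmt11 (n : ℕ) (hn : 1 ≤ n) :
    ∃ C : ℝ, ∀ S : Set (EuclideanSpace ℝ (Fin (n+1))), MeasurableSet S →
      ∀ x₀ : EuclideanSpace ℝ (Fin (n+1)), ∀ t₀ : ℝ, 0 < t₀ →
        ENNReal.ofReal ((4 * π * t₀) ^ (-(n:ℝ)/2)) *
            ∫⁻ x in S, ENNReal.ofReal (‖x‖ ^ 2 * Real.exp (-‖x - x₀‖ ^ 2 / (4 * t₀)))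
              ∂μH[(n:ℝ)]
          ≤ 2 * entropy n S * ENNReal.ofReal (C * t₀ + ‖x₀‖ ^ 2) := by
  refine ⟨8 * 2 ^ ((n:ℝ)/2) / Real.exp 1, fun S hS x₀ t₀ ht => ?_⟩
  set C : ℝ := 8 * 2 ^ ((n:ℝ)/2) / Real.exp 1 with hC
  have hπ : (0:ℝ) < π := Real.pi_pos
  set a : ℝ≥0∞ := ENNReal.ofReal ((4 * π * t₀) ^ (-(n:ℝ)/2)) with ha
  set I₁ : ℝ≥0∞ := ∫⁻ x in S, ENNReal.ofReal (Real.exp (-‖x - x₀‖ ^ 2 / (8 * t₀))) ∂μH[(n:ℝ)]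
    with hI₁
  set I₂ : ℝ≥0∞ := ∫⁻ x in S, ENNReal.ofReal (Real.exp (-‖x - x₀‖ ^ 2 / (4 * t₀))) ∂μH[(n:ℝ)]
    with hI₂
  have hc₁ : (0:ℝ) ≤ 16 * t₀ / Real.exp 1 := by positivity
  have hc₂ : (0:ℝ) ≤ 2 * ‖x₀‖ ^ 2 := by positivity
  -- pointwise bound
  have hpt : ∀ x : EuclideanSpace ℝ (Fin (n+1)),
      ENNReal.ofReal (‖x‖ ^ 2 * Real.exp (-‖x - x₀‖ ^ 2 / (4 * t₀))) ≤
      ENNReal.ofReal (16 * t₀ / Real.exp 1) *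
          ENNReal.ofReal (Real.exp (-‖x - x₀‖ ^ 2 / (8 * t₀))) +
        ENNReal.ofReal (2 * ‖x₀‖ ^ 2) *
          ENNReal.ofReal (Real.exp (-‖x - x₀‖ ^ 2 / (4 * t₀))) := by
    intro x
    rw [← ENNReal.ofReal_mul hc₁, ← ENNReal.ofReal_mul hc₂,
      ← ENNReal.ofReal_add (by positivity) (by positivity)]
    exact ENNReal.ofReal_le_ofReal (stmt11_ptReal t₀ ht x x₀)
  have hmeas : Measurable (fun x : EuclideanSpace ℝ (Fin (n+1)) =>
      ENNReal.ofReal (16 * t₀ / Real.exp 1) *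
        ENNReal.ofReal (Real.exp (-‖x - x₀‖ ^ 2 / (8 * t₀)))) := by
    apply Measurable.const_mul
    apply ENNReal.measurable_ofReal.comp
    exact (Real.continuous_exp.comp (by continuity)).measurable
  have step1 : (∫⁻ x in S, ENNReal.ofReal (‖x‖ ^ 2 * Real.exp (-‖x - x₀‖ ^ 2 / (4 * t₀)))
        ∂μH[(n:ℝ)]) ≤
      ENNReal.ofReal (16 * t₀ / Real.exp 1) * I₁ + ENNReal.ofReal (2 * ‖x₀‖ ^ 2) * I₂ := by
    calc (∫⁻ x in S, ENNReal.ofReal (‖x‖ ^ 2 * Real.exp (-‖x - x₀‖ ^ 2 / (4 * t₀)))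
          ∂μH[(n:ℝ)])
        ≤ ∫⁻ x in S, (ENNReal.ofReal (16 * t₀ / Real.exp 1) *
            ENNReal.ofReal (Real.exp (-‖x - x₀‖ ^ 2 / (8 * t₀))) +
          ENNReal.ofReal (2 * ‖x₀‖ ^ 2) *
            ENNReal.ofReal (Real.exp (-‖x - x₀‖ ^ 2 / (4 * t₀)))) ∂μH[(n:ℝ)] :=
          lintegral_mono fun x => hpt x
      _ = (∫⁻ x in S, ENNReal.ofReal (16 * t₀ / Real.exp 1) *
            ENNReal.ofReal (Real.exp (-‖x - x₀‖ ^ 2 / (8 * t₀))) ∂μH[(n:ℝ)]) +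
          ∫⁻ x in S, ENNReal.ofReal (2 * ‖x₀‖ ^ 2) *
            ENNReal.ofReal (Real.exp (-‖x - x₀‖ ^ 2 / (4 * t₀))) ∂μH[(n:ℝ)] :=
          lintegral_add_left hmeas _
      _ = ENNReal.ofReal (16 * t₀ / Real.exp 1) * I₁ + ENNReal.ofReal (2 * ‖x₀‖ ^ 2) * I₂ := by
          rw [lintegral_const_mul' _ _ ENNReal.ofReal_ne_top,
            lintegral_const_mul' _ _ ENNReal.ofReal_ne_top]
  -- relate to gaussianF at time 2t₀
  have h2 : gaussianF n S x₀ (2*t₀) = ENNReal.ofReal ((4 * π * (2*t₀)) ^ (-(n:ℝ)/2)) * I₁ := by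
    unfold gaussianF
    congr 1
    refine lintegral_congr fun x => ?_
    rw [show (4*(2*t₀):ℝ) = 8*t₀ by ring]
  have haeq : a = ENNReal.ofReal (2 ^ ((n:ℝ)/2)) *
      ENNReal.ofReal ((4 * π * (2*t₀)) ^ (-(n:ℝ)/2)) := by
    rw [← ENNReal.ofReal_mul (by positivity)]
    exact congrArg ENNReal.ofReal (stmt11_scalarEq n t₀ ht)
  have hF1 : gaussianF n S x₀ (2*t₀) ≤ entropy n S :=
    stmt11_le_entropy n S x₀ (2*t₀) (by linarith)
  have hF2 : gaussianF n S x₀ t₀ ≤ entropy n S := stmt11_le_entropy n S x₀ t₀ ht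
  have key1 : a * I₁ ≤ ENNReal.ofReal (2 ^ ((n:ℝ)/2)) * entropy n S := by
    rw [haeq, mul_assoc, ← h2]
    exact mul_le_mul_right hF1 _
  have key2 : a * I₂ ≤ entropy n S := by
    have : a * I₂ = gaussianF n S x₀ t₀ := rfl
    rw [this]; exact hF2
  calc a * ∫⁻ x in S, ENNReal.ofReal (‖x‖ ^ 2 * Real.exp (-‖x - x₀‖ ^ 2 / (4 * t₀)))
        ∂μH[(n:ℝ)]
      ≤ a * (ENNReal.ofReal (16 * t₀ / Real.exp 1) * I₁ +
          ENNReal.ofReal (2 * ‖x₀‖ ^ 2) * I₂) := mul_le_mul_right step1 a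
    _ = ENNReal.ofReal (16 * t₀ / Real.exp 1) * (a * I₁) +
        ENNReal.ofReal (2 * ‖x₀‖ ^ 2) * (a * I₂) := by ring
    _ ≤ ENNReal.ofReal (16 * t₀ / Real.exp 1) *
          (ENNReal.ofReal (2 ^ ((n:ℝ)/2)) * entropy n S) +
        ENNReal.ofReal (2 * ‖x₀‖ ^ 2) * entropy n S :=
        add_le_add (mul_le_mul_right key1 _) (mul_le_mul_right key2 _)
    _ = (ENNReal.ofReal (16 * t₀ / Real.exp 1) * ENNReal.ofReal (2 ^ ((n:ℝ)/2)) +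
        ENNReal.ofReal (2 * ‖x₀‖ ^ 2)) * entropy n S := by ring
    _ = ENNReal.ofReal (2 * (C * t₀ + ‖x₀‖ ^ 2)) * entropy n S := by
        rw [← ENNReal.ofReal_mul hc₁, ← ENNReal.ofReal_add (by positivity) hc₂]
        congr 1
        have he : Real.exp 1 ≠ 0 := (Real.exp_pos 1).ne'
        rw [hC]; field_simp; ring
    _ = 2 * entropy n S * ENNReal.ofReal (C * t₀ + ‖x₀‖ ^ 2) := by
        rw [ENNReal.ofReal_mul (by norm_num : (0:ℝ) ≤ 2), ENNReal.ofReal_ofNat]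
        ring
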